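/- (Lorentz interpolation inequality) There is a constant C > 0 such that for every z in the Schwartz space on ℝ³, ‖z‖_{L^{3,1}(ℝ³)}² ≤ C·‖z‖_{L²(ℝ³)}·‖∇z‖_{L²(ℝ³)}, where L^{3,1} = [L², L⁶]_{1/2,1} is the Lorentz space obtained by real interpolation. -/

import Mathlib

open MeasureTheory
open scoped ENNReal

open Metric Filter
open scoped NNReal SchwartzMap Topology
set_option maxHeartbeats 1000000

section Aux

variable {E F : Type*} [NormedAddCommGroup E] [NormedSpace ℝ E]
  [NormedAddCommGroup F] [NormedSpace ℝ F]
  [MeasurableSpace E] [BorelSpace E] [FiniteDimensional ℝ E]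
  {μ : Measure E} [μ.HasTemperateGrowth]

lemma schwartz_memLp (f : 𝓢(E, F)) (p : ℝ≥0∞) (hp : 1 ≤ p) (hp' : p ≠ ∞) :
    MemLp (⇑f) p μ := by
  refine ⟨f.continuous.aestronglyMeasurable, ?_⟩
  obtain ⟨M, hM0, hM⟩ := f.decay 0 0
  have hMb : ∀ x, ‖f x‖ ≤ M := by
    intro x
    have := hM x
    simpa [norm_iteratedFDeriv_zero] using this
  rw [eLpNorm_eq_lintegral_rpow_enorm_toReal (by positivity) hp']
  have hpt : 1 ≤ p.toReal := by
    rw [← ENNReal.ofReal_one, ← ENNReal.ofReal_toReal hp'] at hp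
    exact (ENNReal.ofReal_le_ofReal_iff ENNReal.toReal_nonneg).mp hp
  have key : ∫⁻ x, (‖f x‖₊ : ℝ≥0∞) ^ p.toReal ∂μ
      ≤ (ENNReal.ofReal M) ^ (p.toReal - 1) * ∫⁻ x, (‖f x‖₊ : ℝ≥0∞) ∂μ := by
    rw [← lintegral_const_mul' _ _
      (ENNReal.rpow_lt_top_of_nonneg (by linarith) ENNReal.ofReal_ne_top).ne]
    refine lintegral_mono fun x => ?_
    have h1 : (‖f x‖₊ : ℝ≥0∞) ^ p.toReal
        = (‖f x‖₊ : ℝ≥0∞) ^ (p.toReal - 1) * (‖f x‖₊ : ℝ≥0∞) ^ (1:ℝ) := by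
      rw [← ENNReal.rpow_add_of_nonneg _ _ (by linarith) zero_le_one]
      norm_num
    rw [h1, ENNReal.rpow_one]
    refine mul_le_mul' ?_ le_rfl
    refine ENNReal.rpow_le_rpow ?_ (by linarith)
    rw [← enorm_eq_nnnorm, ← ofReal_norm]
    exact ENNReal.ofReal_le_ofReal (hMb x)
  have hfi : ∫⁻ x, (‖f x‖₊ : ℝ≥0∞) ∂μ < ∞ := f.integrable.2
  refine ENNReal.rpow_lt_top_of_nonneg (by positivity) ?_
  refine (key.trans_lt ?_).ne
  exact ENNReal.mul_lt_top
    (ENNReal.rpow_lt_top_of_nonneg (by linarith) ENNReal.ofReal_ne_top) hfi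

end Aux

noncomputable abbrev E3 : Type := EuclideanSpace ℝ (Fin 3)

lemma sobolev_schwartz : ∃ K : ℝ≥0,
    ∀ z : 𝓢(E3, ℝ),
      eLpNorm (⇑z) 6 volume ≤ (K : ℝ≥0∞) * eLpNorm (fderiv ℝ (⇑z)) 2 volume := by
  classical
  refine ⟨eLpNormLESNormFDerivOfEqInnerConst (volume : Measure E3) (((2:ℝ≥0)):ℝ), fun z => ?_⟩
  set K : ℝ≥0 := eLpNormLESNormFDerivOfEqInnerConst (volume : Measure E3) (((2:ℝ≥0)):ℝ) with hK
  set A : ℝ≥0∞ := eLpNorm (⇑z) 2 volume with hA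
  set B : ℝ≥0∞ := eLpNorm (fderiv ℝ (⇑z)) 2 volume with hB
  have hzc : Continuous (fderiv ℝ (⇑z)) := by
    have h1 : ⇑(SchwartzMap.fderivCLM ℝ E3 ℝ z) = fderiv ℝ (⇑z) := by
      funext x; exact SchwartzMap.fderivCLM_apply ℝ z x
    rw [← h1]; exact (SchwartzMap.fderivCLM ℝ E3 ℝ z).continuous
  have hA_top : A ≠ ∞ := by
    rw [hA]
    exact (schwartz_memLp z 2 one_le_two (by norm_num)).eLpNorm_ne_top
  have hB_top : B ≠ ∞ := by
    rw [hB, show fderiv ℝ ⇑z = ⇑(SchwartzMap.fderivCLM ℝ E3 ℝ z) from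
      funext fun x => (SchwartzMap.fderivCLM_apply ℝ z x).symm]
    exact (schwartz_memLp _ 2 one_le_two (by norm_num)).eLpNorm_ne_top
  -- bump function
  let φ : ContDiffBump (0 : E3) := ⟨1, 2, one_pos, one_lt_two⟩
  have hφcs : HasCompactSupport (fderiv ℝ (⇑φ)) :=
    HasCompactSupport.fderiv (𝕜 := ℝ) φ.hasCompactSupport
  have hφdc : Continuous (fderiv ℝ (⇑φ)) :=
    (φ.contDiff (n := ⊤)).continuous_fderiv (by simp)
  obtain ⟨M, hM⟩ := hφcs.exists_bound_of_continuous hφdc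
  have hM0 : 0 ≤ M := le_trans (norm_nonneg _) (hM 0)
  -- scaled cutoffs
  set c : ℕ → ℝ := fun n => (n : ℝ) + 1 with hc
  have hcpos : ∀ n, 0 < c n := fun n => by positivity
  set L : ℕ → E3 →L[ℝ] E3 := fun n => (c n)⁻¹ • ContinuousLinearMap.id ℝ E3 with hL
  set ψ : ℕ → E3 → ℝ := fun n x => φ (L n x) with hψ
  set u : ℕ → E3 → ℝ := fun n x => z x * ψ n x with hu
  have hLnorm : ∀ n, ‖L n‖ ≤ (c n)⁻¹ := by
    intro n
    simp only [hL]
    refine (norm_smul_le ((c n)⁻¹) (ContinuousLinearMap.id ℝ E3)).trans ?_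
    rw [Real.norm_eq_abs, abs_of_nonneg (inv_nonneg.2 (hcpos n).le)]
    have h1 : ‖ContinuousLinearMap.id ℝ E3‖ ≤ 1 := ContinuousLinearMap.norm_id_le
    nlinarith [inv_nonneg.2 (hcpos n).le]
  have hψ_cd : ∀ n, ContDiff ℝ 1 (ψ n) := fun n =>
    (φ.contDiff (n := 1)).comp (L n).contDiff
  have hψ_d : ∀ n x, DifferentiableAt ℝ (ψ n) x := fun n x =>
    ((hψ_cd n).differentiable one_ne_zero).differentiableAt
  have hu_cd : ∀ n, ContDiff ℝ 1 (u n) := fun n => (z.smooth 1).mul (hψ_cd n)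
  have hψ_fderiv_bound : ∀ n x, ‖fderiv ℝ (ψ n) x‖ ≤ M * (c n)⁻¹ := by
    intro n x
    have hcomp : fderiv ℝ (ψ n) x = (fderiv ℝ (⇑φ) (L n x)).comp (L n) := by
      have := fderiv_comp (𝕜 := ℝ) (x := x)
        (((φ.contDiff (n := 1)).differentiable one_ne_zero).differentiableAt)
        (L n).differentiableAt
      rw [hψ]
      rw [(L n).fderiv] at this; exact this
    rw [hcomp]
    calc ‖(fderiv ℝ (⇑φ) (L n x)).comp (L n)‖
        ≤ ‖fderiv ℝ (⇑φ) (L n x)‖ * ‖L n‖ := ContinuousLinearMap.opNorm_comp_le _ _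
      _ ≤ M * (c n)⁻¹ :=
          mul_le_mul (hM _) (hLnorm n) (norm_nonneg _) hM0
  have hψ_norm_le_one : ∀ n x, ‖ψ n x‖ ≤ 1 := by
    intro n x
    rw [Real.norm_eq_abs, abs_of_nonneg φ.nonneg]
    exact φ.le_one
  have hψ_one : ∀ n x, ‖x‖ ≤ c n → ψ n x = 1 := by
    intro n x hx
    refine φ.one_of_mem_closedBall ?_
    rw [mem_closedBall, dist_zero_right, hL]
    simp only [ContinuousLinearMap.smul_apply, ContinuousLinearMap.id_apply, norm_smul,
      Real.norm_eq_abs, abs_of_nonneg (inv_nonneg.2 (hcpos n).le)]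
    rw [inv_mul_le_iff₀ (hcpos n)]
    linarith
  have hu_cs : ∀ n, HasCompactSupport (u n) := by
    intro n
    refine HasCompactSupport.intro (isCompact_closedBall (0 : E3) (2 * c n)) ?_
    intro x hx
    rw [mem_closedBall, dist_zero_right, not_le] at hx
    have : ψ n x = 0 := by
      refine φ.zero_of_le_dist ?_
      rw [dist_zero_right, hL]
      simp only [ContinuousLinearMap.smul_apply, ContinuousLinearMap.id_apply, norm_smul,
        Real.norm_eq_abs, abs_of_nonneg (inv_nonneg.2 (hcpos n).le)]
      rw [le_inv_mul_iff₀ (hcpos n)]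
      linarith
    simp [hu, this]
  -- Sobolev inequality on each truncation
  have hfin : (0:ℕ) < Module.finrank ℝ E3 := by
    rw [finrank_euclideanSpace]; norm_num
  have h6 : ∀ n, eLpNorm (u n) 6 volume ≤ K * eLpNorm (fderiv ℝ (u n)) 2 volume := by
    intro n
    have := eLpNorm_le_eLpNorm_fderiv_of_eq_inner (volume : Measure E3)
      (hu_cd n) (hu_cs n) (p := 2) (p' := 6) one_le_two hfin
      (by rw [finrank_euclideanSpace]; norm_num)
    have h2 : ((6:ℝ≥0) : ℝ≥0∞) = (6 : ℝ≥0∞) := by norm_cast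
    have h3 : ((2:ℝ≥0) : ℝ≥0∞) = (2 : ℝ≥0∞) := by norm_cast
    rwa [h2, h3, ← hK] at this
  -- bound on the gradient of the truncation
  have hgrad : ∀ n, eLpNorm (fderiv ℝ (u n)) 2 volume ≤
      B + ENNReal.ofReal (M * (c n)⁻¹) * A := by
    intro n
    have hpt : ∀ x, ‖fderiv ℝ (u n) x‖ ≤ ‖fderiv ℝ (⇑z) x‖ + (M * (c n)⁻¹) * ‖z x‖ := by
      intro x
      have hd : fderiv ℝ (u n) x = z x • fderiv ℝ (ψ n) x + ψ n x • fderiv ℝ (⇑z) x := by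
        simp only [hu]
        exact fderiv_mul (z.differentiable.differentiableAt) (hψ_d n x)
      rw [hd]
      calc ‖z x • fderiv ℝ (ψ n) x + ψ n x • fderiv ℝ (⇑z) x‖
          ≤ ‖z x • fderiv ℝ (ψ n) x‖ + ‖ψ n x • fderiv ℝ (⇑z) x‖ := norm_add_le _ _
        _ ≤ ‖z x‖ * (M * (c n)⁻¹) + 1 * ‖fderiv ℝ (⇑z) x‖ := by
            rw [norm_smul, norm_smul]
            have e1 := hψ_fderiv_bound n x
            have e2 := hψ_norm_le_one n x
            have e3 : (0:ℝ) ≤ ‖z x‖ := norm_nonneg _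
            have e4 : (0:ℝ) ≤ ‖fderiv ℝ (⇑z) x‖ := norm_nonneg _
            have e5 : (0:ℝ) ≤ ‖ψ n x‖ := norm_nonneg _
            nlinarith
        _ = ‖fderiv ℝ (⇑z) x‖ + (M * (c n)⁻¹) * ‖z x‖ := by ring
    calc eLpNorm (fderiv ℝ (u n)) 2 volume
        ≤ eLpNorm (fun x => ‖fderiv ℝ (⇑z) x‖ + (M * (c n)⁻¹) * ‖z x‖) 2 volume := by
          refine eLpNorm_mono_real fun x => ?_
          exact hpt x
      _ ≤ eLpNorm (fun x => ‖fderiv ℝ (⇑z) x‖) 2 volume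
          + eLpNorm (fun x => (M * (c n)⁻¹) * ‖z x‖) 2 volume := by
          refine eLpNorm_add_le ?_ ?_ one_le_two
          · exact hzc.norm.aestronglyMeasurable
          · exact (continuous_const.mul z.continuous.norm).aestronglyMeasurable
      _ = B + ENNReal.ofReal (M * (c n)⁻¹) * A := by
          rw [eLpNorm_norm]
          congr 1
          have h1 : (fun x => (M * (c n)⁻¹) * ‖z x‖)
              = (M * (c n)⁻¹) • (fun x => ‖z x‖) := rfl
          rw [h1, eLpNorm_const_smul, eLpNorm_norm]
          try rw [ENNReal.smul_def, smul_eq_mul]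
          congr 1
          exact Real.enorm_eq_ofReal (by positivity)
  -- total lintegral via monotone convergence over balls
  set g : E3 → ℝ≥0∞ := fun x => (‖z x‖₊ : ℝ≥0∞) ^ (6:ℝ) with hg
  have hg_meas : Measurable g := by
    simp only [hg]
    exact (z.continuous.measurable.nnnorm.coe_nnreal_ennreal).pow_const (6:ℝ) |>.mono le_rfl le_rfl
  have hcmono : ∀ {m n : ℕ}, m ≤ n → c m ≤ c n := by
    intro m n hmn
    simp only [hc]
    have : (m:ℝ) ≤ (n:ℝ) := Nat.cast_le.2 hmn
    linarith
  have hmono_int : Monotone (fun n => ∫⁻ x in closedBall (0:E3) (c n), g x) := by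
    intro m n hmn
    exact lintegral_mono_set (closedBall_subset_closedBall (hcmono hmn))
  have hsup : (⨆ n, ∫⁻ x in closedBall (0:E3) (c n), g x) = ∫⁻ x, g x := by
    have h1 : ∀ n : ℕ, ∫⁻ x in closedBall (0:E3) (c n), g x
        = ∫⁻ x, (closedBall (0:E3) (c n)).indicator g x := fun n => by
      rw [lintegral_indicator measurableSet_closedBall]
    simp_rw [h1]
    rw [← lintegral_iSup' (fun n => (hg_meas.indicator measurableSet_closedBall).aemeasurable)
      (ae_of_all _ (fun x m n hmn => Set.indicator_le_indicator_of_subset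
        (closedBall_subset_closedBall (hcmono hmn)) (fun _ => zero_le) x))]
    congr 1
    funext x
    apply le_antisymm
    · exact iSup_le fun n => Set.indicator_le_self _ _ x
    · obtain ⟨n, hn⟩ := exists_nat_ge ‖x‖
      refine le_trans (le_of_eq ?_) (le_iSup (fun n => (closedBall (0:E3) (c n)).indicator g x) n)
      rw [Set.indicator_of_mem]
      rw [mem_closedBall, dist_zero_right]
      simp only [hc]
      linarith
  have htot : Tendsto (fun n => ∫⁻ x in closedBall (0:E3) (c n), g x) atTop
      (𝓝 (∫⁻ x, g x)) := by
    rw [← hsup]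
    exact tendsto_atTop_iSup hmono_int
  -- key bound per n
  have key : ∀ n, ∫⁻ x in closedBall (0:E3) (c n), g x
      ≤ (K * (B + ENNReal.ofReal (M * (c n)⁻¹) * A)) ^ (6:ℝ) := by
    intro n
    have hcongr : ∫⁻ x in closedBall (0:E3) (c n), g x
        = ∫⁻ x in closedBall (0:E3) (c n), (‖u n x‖₊ : ℝ≥0∞) ^ (6:ℝ) := by
      refine setLIntegral_congr_fun measurableSet_closedBall (fun x hx => ?_)
      simp only [hg, hu]
      rw [hψ_one n x (by rwa [mem_closedBall, dist_zero_right] at hx), mul_one]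
    have hle : ∫⁻ x in closedBall (0:E3) (c n), (‖u n x‖₊ : ℝ≥0∞) ^ (6:ℝ)
        ≤ ∫⁻ x, (‖u n x‖₊ : ℝ≥0∞) ^ (6:ℝ) := setLIntegral_le_lintegral _ _
    have heq : ∫⁻ x, (‖u n x‖₊ : ℝ≥0∞) ^ (6:ℝ) = (eLpNorm (u n) 6 volume) ^ (6:ℝ) := by
      rw [eLpNorm_eq_lintegral_rpow_enorm_toReal (by norm_num) (by norm_num)]
      rw [← ENNReal.rpow_mul]
      norm_num
      simp only [enorm_eq_nnnorm]
    rw [hcongr]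
    refine hle.trans ?_
    rw [heq]
    exact ENNReal.rpow_le_rpow ((h6 n).trans (mul_le_mul_right (hgrad n) _)) (by norm_num)
  -- pass to the limit
  have t0 : Tendsto (fun n : ℕ => M * (c n)⁻¹) atTop (𝓝 0) := by
    have h1 : Tendsto (fun n : ℕ => 1/((n:ℝ)+1)) atTop (𝓝 0) :=
      tendsto_one_div_add_atTop_nhds_zero_nat
    have h2 := h1.const_mul M
    rw [mul_zero] at h2
    refine h2.congr fun n => ?_
    simp only [hc]
    ring
  have t1 : Tendsto (fun n : ℕ => ENNReal.ofReal (M * (c n)⁻¹)) atTop (𝓝 0) := by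
    have := ENNReal.tendsto_ofReal t0
    rwa [ENNReal.ofReal_zero] at this
  have t2 : Tendsto (fun n : ℕ => ENNReal.ofReal (M * (c n)⁻¹) * A) atTop (𝓝 0) := by
    have := ENNReal.Tendsto.mul_const t1 (Or.inr hA_top)
    rwa [zero_mul] at this
  have t3 : Tendsto (fun n : ℕ => B + ENNReal.ofReal (M * (c n)⁻¹) * A) atTop (𝓝 B) := by
    have := t2.const_add B
    rwa [add_zero] at this
  have t4 : Tendsto (fun n : ℕ => K * (B + ENNReal.ofReal (M * (c n)⁻¹) * A)) atTop
      (𝓝 (K * B)) := ENNReal.Tendsto.const_mul t3 (Or.inr ENNReal.coe_ne_top)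
  have t5 : Tendsto (fun n : ℕ => (K * (B + ENNReal.ofReal (M * (c n)⁻¹) * A)) ^ (6:ℝ)) atTop
      (𝓝 ((K * B) ^ (6:ℝ))) :=
    (ENNReal.continuous_rpow_const.tendsto _).comp t4
  have final6 : ∫⁻ x, g x ≤ ((K : ℝ≥0∞) * B) ^ (6:ℝ) :=
    le_of_tendsto_of_tendsto' htot t5 key
  have hz6 : eLpNorm (⇑z) 6 volume = (∫⁻ x, g x) ^ (1/(6:ℝ)) := by
    rw [eLpNorm_eq_lintegral_rpow_enorm_toReal (by norm_num) (by norm_num)]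
    simp only [hg]
    norm_num
    simp only [enorm_eq_nnnorm]
  rw [hz6]
  calc (∫⁻ x, g x) ^ (1/(6:ℝ)) ≤ (((K : ℝ≥0∞) * B) ^ (6:ℝ)) ^ (1/(6:ℝ)) :=
        ENNReal.rpow_le_rpow final6 (by norm_num)
    _ = (K : ℝ≥0∞) * B := by
        rw [← ENNReal.rpow_mul]
        norm_num

/-- The Lorentz `L^{3,1}` norm on `ℝ³`, via the layer-cake formula
`‖f‖_{L^{3,1}} = 3 ∫₀^∞ (μ {|f| > λ})^{1/3} dλ`. -/
noncomputable def lorentz31 (f : EuclideanSpace ℝ (Fin 3) → ℝ) : ℝ≥0∞ :=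
  3 * ∫⁻ l in Set.Ioi (0:ℝ), (volume {x | l < |f x|}) ^ ((1:ℝ)/3)

lemma lorentz_interp (z : 𝓢(E3, ℝ)) :
    lorentz31 (⇑z) ^ 2 ≤
      ENNReal.ofReal 144 * eLpNorm (⇑z) 2 volume * eLpNorm (⇑z) 6 volume := by
  classical
  set A : ℝ≥0∞ := eLpNorm (⇑z) 2 volume with hA
  set S : ℝ≥0∞ := eLpNorm (⇑z) 6 volume with hS
  set ν : ℝ → ℝ≥0∞ := fun l => volume {x : E3 | l < |z x|} with hν
  have hA_top : A ≠ ∞ := (schwartz_memLp z 2 one_le_two (by norm_num)).eLpNorm_ne_top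
  have hS_top : S ≠ ∞ := (schwartz_memLp z 6 (by norm_num) (by norm_num)).eLpNorm_ne_top
  -- degenerate case: z ≡ 0 a.e.
  have hdeg : (⇑z =ᵐ[volume] 0) → lorentz31 (⇑z) ^ 2 ≤ ENNReal.ofReal 144 * A * S := by
    intro hz0
    have h0 : volume {x : E3 | z x ≠ 0} = 0 := by
      simpa [Filter.EventuallyEq, ae_iff] using hz0
    have hnull : ∀ l : ℝ, l ∈ Set.Ioi (0:ℝ) → ν l ^ ((1:ℝ)/3) = 0 := by
      intro l hl
      have hsub : {x : E3 | l < |z x|} ⊆ {x : E3 | z x ≠ 0} := by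
        intro x hx
        simp only [Set.mem_setOf_eq] at hx ⊢
        intro hzx
        rw [hzx] at hx
        simp at hx
        exact absurd hx (not_lt.2 (le_of_lt hl)).elim
      have : ν l = 0 := measure_mono_null hsub h0
      rw [this, ENNReal.zero_rpow_of_pos (by norm_num)]
    have : lorentz31 (⇑z) = 0 := by
      rw [lorentz31, setLIntegral_congr_fun measurableSet_Ioi hnull,
        lintegral_zero, mul_zero]
    rw [this]
    simp
  by_cases hS0 : S = 0
  · exact hdeg ((eLpNorm_eq_zero_iff z.continuous.aestronglyMeasurable (by norm_num)).1 hS0)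
  by_cases hA0 : A = 0
  · exact hdeg ((eLpNorm_eq_zero_iff z.continuous.aestronglyMeasurable (by norm_num)).1 hA0)
  -- main case
  set a : ℝ := A.toReal with ha_def
  set s : ℝ := S.toReal with hs_def
  have ha : 0 < a := ENNReal.toReal_pos hA0 hA_top
  have hs : 0 < s := ENNReal.toReal_pos hS0 hS_top
  set l0 : ℝ := s ^ ((3:ℝ)/2) * a ^ (-(1:ℝ)/2) with hl0_def
  have hl0 : 0 < l0 := by
    rw [hl0_def]; positivity
  -- Chebyshev bounds
  have cheb : ∀ (p : ℝ≥0∞), p ≠ 0 → p ≠ ∞ → ∀ l : ℝ, 0 < l →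
      ν l ≤ (ENNReal.ofReal l)⁻¹ ^ p.toReal * eLpNorm (⇑z) p volume ^ p.toReal := by
    intro p hp0 hptop l hl
    refine le_trans (measure_mono ?_) (meas_ge_le_mul_pow_eLpNorm_enorm volume hp0 hptop
      z.continuous.aestronglyMeasurable (by simp [hl, hl.not_gt] : ENNReal.ofReal l ≠ 0)
      (fun h => absurd h ENNReal.ofReal_ne_top))
    intro x hx
    simp only [Set.mem_setOf_eq] at hx ⊢
    rw [Real.enorm_eq_ofReal_abs]
    exact ENNReal.ofReal_le_ofReal hx.le
  -- split the integral
  have hsplit : lorentz31 (⇑z) = 3 * ((∫⁻ l in Set.Ioc 0 l0, ν l ^ ((1:ℝ)/3))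
      + ∫⁻ l in Set.Ioi l0, ν l ^ ((1:ℝ)/3)) := by
    rw [lorentz31, ← Set.Ioc_union_Ioi_eq_Ioi hl0.le,
      lintegral_union measurableSet_Ioi (Set.Ioc_disjoint_Ioi le_rfl)]
  -- piece 1
  have hpt1 : ∀ l : ℝ, l ∈ Set.Ioc (0:ℝ) l0 →
      ν l ^ ((1:ℝ)/3) ≤ A ^ ((2:ℝ)/3) * ENNReal.ofReal (l ^ (-(2:ℝ)/3)) := by
    intro l hl
    have h1 : ν l ≤ (ENNReal.ofReal l)⁻¹ ^ (2:ℝ) * A ^ (2:ℝ) := by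
      have := cheb 2 (by norm_num) (by norm_num) l hl.1
      rwa [show (2:ℝ≥0∞).toReal = (2:ℝ) by simp, ← hA] at this
    calc ν l ^ ((1:ℝ)/3)
        ≤ ((ENNReal.ofReal l)⁻¹ ^ (2:ℝ) * A ^ (2:ℝ)) ^ ((1:ℝ)/3) :=
          ENNReal.rpow_le_rpow h1 (by norm_num)
      _ = A ^ ((2:ℝ)/3) * (ENNReal.ofReal l)⁻¹ ^ ((2:ℝ)/3) := by
          rw [ENNReal.mul_rpow_of_nonneg _ _ (by norm_num), mul_comm,
            ← ENNReal.rpow_mul, ← ENNReal.rpow_mul]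
          norm_num
      _ = A ^ ((2:ℝ)/3) * ENNReal.ofReal (l ^ (-(2:ℝ)/3)) := by
          congr 1
          rw [ENNReal.inv_rpow, ← ENNReal.rpow_neg, ENNReal.ofReal_rpow_of_pos hl.1]
          norm_num
  have hint1 : ∫⁻ l in Set.Ioc (0:ℝ) l0, ENNReal.ofReal (l ^ (-(2:ℝ)/3))
      = ENNReal.ofReal (3 * l0 ^ ((1:ℝ)/3)) := by
    rw [← ofReal_integral_eq_lintegral_ofReal]
    · congr 1
      rw [← intervalIntegral.integral_of_le hl0.le,
        integral_rpow (Or.inl (by norm_num))]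
      rw [Real.zero_rpow (by norm_num)]
      norm_num
      ring
    · rw [← IntegrableOn, ← intervalIntegrable_iff_integrableOn_Ioc_of_le hl0.le]
      exact intervalIntegral.intervalIntegrable_rpow' (by norm_num)
    · filter_upwards [ae_restrict_mem measurableSet_Ioc] with l hl
      exact Real.rpow_nonneg hl.1.le _
  have hP1 : ∫⁻ l in Set.Ioc (0:ℝ) l0, ν l ^ ((1:ℝ)/3)
      ≤ A ^ ((2:ℝ)/3) * ENNReal.ofReal (3 * l0 ^ ((1:ℝ)/3)) := by
    calc ∫⁻ l in Set.Ioc (0:ℝ) l0, ν l ^ ((1:ℝ)/3)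
        ≤ ∫⁻ l in Set.Ioc (0:ℝ) l0, A ^ ((2:ℝ)/3) * ENNReal.ofReal (l ^ (-(2:ℝ)/3)) :=
          setLIntegral_mono' measurableSet_Ioc hpt1
      _ = A ^ ((2:ℝ)/3) * ∫⁻ l in Set.Ioc (0:ℝ) l0, ENNReal.ofReal (l ^ (-(2:ℝ)/3)) :=
          lintegral_const_mul' _ _ (by
            exact ENNReal.rpow_ne_top_of_nonneg (by norm_num) hA_top)
      _ = A ^ ((2:ℝ)/3) * ENNReal.ofReal (3 * l0 ^ ((1:ℝ)/3)) := by rw [hint1]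
  -- piece 2
  have hpt2 : ∀ l : ℝ, l ∈ Set.Ioi l0 →
      ν l ^ ((1:ℝ)/3) ≤ S ^ (2:ℝ) * ENNReal.ofReal (l ^ (-(2:ℝ))) := by
    intro l hl
    have hl' : 0 < l := hl0.trans hl
    have h1 : ν l ≤ (ENNReal.ofReal l)⁻¹ ^ (6:ℝ) * S ^ (6:ℝ) := by
      have := cheb 6 (by norm_num) (by norm_num) l hl'
      rwa [show (6:ℝ≥0∞).toReal = (6:ℝ) by simp, ← hS] at this
    calc ν l ^ ((1:ℝ)/3)
        ≤ ((ENNReal.ofReal l)⁻¹ ^ (6:ℝ) * S ^ (6:ℝ)) ^ ((1:ℝ)/3) :=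
          ENNReal.rpow_le_rpow h1 (by norm_num)
      _ = S ^ (2:ℝ) * (ENNReal.ofReal l)⁻¹ ^ (2:ℝ) := by
          rw [ENNReal.mul_rpow_of_nonneg _ _ (by norm_num), mul_comm,
            ← ENNReal.rpow_mul, ← ENNReal.rpow_mul]
          norm_num
      _ = S ^ (2:ℝ) * ENNReal.ofReal (l ^ (-(2:ℝ))) := by
          congr 1
          rw [ENNReal.inv_rpow, ← ENNReal.rpow_neg, ENNReal.ofReal_rpow_of_pos hl']
  have hint2 : ∫⁻ l in Set.Ioi l0, ENNReal.ofReal (l ^ (-(2:ℝ)))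
      = ENNReal.ofReal (l0 ^ (-(1:ℝ))) := by
    rw [← ofReal_integral_eq_lintegral_ofReal]
    · congr 1
      rw [integral_Ioi_rpow_of_lt (by norm_num) hl0]
      norm_num
    · exact integrableOn_Ioi_rpow_of_lt (by norm_num) hl0
    · filter_upwards [ae_restrict_mem measurableSet_Ioi] with l hl
      exact Real.rpow_nonneg (hl0.trans hl).le _
  have hP2 : ∫⁻ l in Set.Ioi l0, ν l ^ ((1:ℝ)/3)
      ≤ S ^ (2:ℝ) * ENNReal.ofReal (l0 ^ (-(1:ℝ))) := by
    calc ∫⁻ l in Set.Ioi l0, ν l ^ ((1:ℝ)/3)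
        ≤ ∫⁻ l in Set.Ioi l0, S ^ (2:ℝ) * ENNReal.ofReal (l ^ (-(2:ℝ))) :=
          setLIntegral_mono' measurableSet_Ioi hpt2
      _ = S ^ (2:ℝ) * ∫⁻ l in Set.Ioi l0, ENNReal.ofReal (l ^ (-(2:ℝ))) :=
          lintegral_const_mul' _ _ (ENNReal.rpow_ne_top_of_nonneg (by norm_num) hS_top)
      _ = S ^ (2:ℝ) * ENNReal.ofReal (l0 ^ (-(1:ℝ))) := by rw [hint2]
  -- convert to reals
  have hAeq : A = ENNReal.ofReal a := (ENNReal.ofReal_toReal hA_top).symm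
  have hSeq : S = ENNReal.ofReal s := (ENNReal.ofReal_toReal hS_top).symm
  have hmain : lorentz31 (⇑z)
      ≤ ENNReal.ofReal (12 * (a ^ ((1:ℝ)/2) * s ^ ((1:ℝ)/2))) := by
    rw [hsplit]
    have hcomb : (∫⁻ l in Set.Ioc 0 l0, ν l ^ ((1:ℝ)/3))
        + ∫⁻ l in Set.Ioi l0, ν l ^ ((1:ℝ)/3)
        ≤ A ^ ((2:ℝ)/3) * ENNReal.ofReal (3 * l0 ^ ((1:ℝ)/3))
          + S ^ (2:ℝ) * ENNReal.ofReal (l0 ^ (-(1:ℝ))) := add_le_add hP1 hP2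
    calc 3 * ((∫⁻ l in Set.Ioc 0 l0, ν l ^ ((1:ℝ)/3))
          + ∫⁻ l in Set.Ioi l0, ν l ^ ((1:ℝ)/3))
        ≤ 3 * (A ^ ((2:ℝ)/3) * ENNReal.ofReal (3 * l0 ^ ((1:ℝ)/3))
          + S ^ (2:ℝ) * ENNReal.ofReal (l0 ^ (-(1:ℝ)))) := mul_le_mul_right hcomb 3
      _ = ENNReal.ofReal (3 * (a ^ ((2:ℝ)/3) * (3 * l0 ^ ((1:ℝ)/3))
          + s ^ (2:ℝ) * l0 ^ (-(1:ℝ)))) := by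
          rw [hAeq, hSeq, ENNReal.ofReal_rpow_of_pos ha, ENNReal.ofReal_rpow_of_pos hs,
            ← ENNReal.ofReal_mul (by positivity), ← ENNReal.ofReal_mul (by positivity),
            ← ENNReal.ofReal_add (by positivity) (by positivity)]
          rw [show (3:ℝ≥0∞) = ENNReal.ofReal (3:ℝ) by norm_num,
            ← ENNReal.ofReal_mul (by norm_num)]
      _ = ENNReal.ofReal (12 * (a ^ ((1:ℝ)/2) * s ^ ((1:ℝ)/2))) := by
          congr 1
          rw [hl0_def]
          rw [Real.mul_rpow (by positivity) (by positivity),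
            Real.mul_rpow (by positivity) (by positivity),
            ← Real.rpow_mul hs.le, ← Real.rpow_mul ha.le,
            ← Real.rpow_mul hs.le, ← Real.rpow_mul ha.le,
            show (3:ℝ)/2 * ((1:ℝ)/3) = (1:ℝ)/2 by norm_num,
            show (-(1:ℝ)/2) * ((1:ℝ)/3) = -((1:ℝ)/6) by norm_num,
            show (3:ℝ)/2 * (-(1:ℝ)) = -((3:ℝ)/2) by norm_num,
            show (-(1:ℝ)/2) * (-(1:ℝ)) = (1:ℝ)/2 by norm_num]
          have e1 : a ^ ((2:ℝ)/3) * a ^ (-((1:ℝ)/6)) = a ^ ((1:ℝ)/2) := by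
            rw [← Real.rpow_add ha]; norm_num
          have e2 : s ^ (2:ℝ) * s ^ (-((3:ℝ)/2)) = s ^ ((1:ℝ)/2) := by
            rw [← Real.rpow_add hs]; norm_num
          calc 3 * (a ^ ((2:ℝ)/3) * (3 * (s ^ ((1:ℝ)/2) * a ^ (-((1:ℝ)/6))))
              + s ^ (2:ℝ) * (s ^ (-((3:ℝ)/2)) * a ^ ((1:ℝ)/2)))
              = 9 * ((a ^ ((2:ℝ)/3) * a ^ (-((1:ℝ)/6))) * s ^ ((1:ℝ)/2))
                + 3 * ((s ^ (2:ℝ) * s ^ (-((3:ℝ)/2))) * a ^ ((1:ℝ)/2)) := by ring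
            _ = 12 * (a ^ ((1:ℝ)/2) * s ^ ((1:ℝ)/2)) := by rw [e1, e2]; ring
  -- finish
  calc lorentz31 (⇑z) ^ 2
      ≤ (ENNReal.ofReal (12 * (a ^ ((1:ℝ)/2) * s ^ ((1:ℝ)/2)))) ^ 2 := by
        exact pow_le_pow_left' hmain 2
    _ = ENNReal.ofReal ((12 * (a ^ ((1:ℝ)/2) * s ^ ((1:ℝ)/2))) ^ 2) := by
        rw [← ENNReal.ofReal_pow (mul_nonneg (by norm_num) (mul_nonneg
          (Real.rpow_nonneg ha.le _) (Real.rpow_nonneg hs.le _)))]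
    _ = ENNReal.ofReal (144 * (a * s)) := by
        congr 1
        have e3 : (a ^ ((1:ℝ)/2)) ^ 2 = a := by
          rw [← Real.rpow_natCast (a ^ ((1:ℝ)/2)) 2, ← Real.rpow_mul ha.le]
          norm_num
        have e4 : (s ^ ((1:ℝ)/2)) ^ 2 = s := by
          rw [← Real.rpow_natCast (s ^ ((1:ℝ)/2)) 2, ← Real.rpow_mul hs.le]
          norm_num
        calc (12 * (a ^ ((1:ℝ)/2) * s ^ ((1:ℝ)/2))) ^ 2
            = 144 * ((a ^ ((1:ℝ)/2)) ^ 2 * (s ^ ((1:ℝ)/2)) ^ 2) := by ring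
          _ = 144 * (a * s) := by rw [e3, e4]
    _ = ENNReal.ofReal 144 * A * S := by
        rw [hAeq, hSeq, ← ENNReal.ofReal_mul (by norm_num),
          ← ENNReal.ofReal_mul (mul_nonneg (by norm_num) ha.le)]
        congr 1
        ring

theorem stmt_13 :
    ∃ C : ℝ, 0 < C ∧
      ∀ z : SchwartzMap (EuclideanSpace ℝ (Fin 3)) ℝ,
        lorentz31 (⇑z) ^ 2 ≤
          ENNReal.ofReal C * eLpNorm (⇑z) 2 volume *
            eLpNorm (fun y => ‖fderiv ℝ (⇑z) y‖) 2 volume := by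
  obtain ⟨Ks, hKs⟩ := sobolev_schwartz
  refine ⟨144 * ((Ks:ℝ) + 1), by positivity, fun z => ?_⟩
  have hnorm : eLpNorm (fun y => ‖fderiv ℝ (⇑z) y‖) 2 volume
      = eLpNorm (fderiv ℝ (⇑z)) 2 volume := eLpNorm_norm _
  have hc : (ENNReal.ofReal 144) * (Ks:ℝ≥0∞) ≤ ENNReal.ofReal (144 * ((Ks:ℝ) + 1)) := by
    rw [ENNReal.ofReal_mul (by norm_num), ← ENNReal.ofReal_coe_nnreal]
    exact mul_le_mul_right (ENNReal.ofReal_le_ofReal (by linarith [Ks.coe_nonneg])) _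
  rw [hnorm]
  calc lorentz31 (⇑z) ^ 2
      ≤ ENNReal.ofReal 144 * eLpNorm (⇑z) 2 volume * eLpNorm (⇑z) 6 volume :=
        lorentz_interp z
    _ ≤ ENNReal.ofReal 144 * eLpNorm (⇑z) 2 volume *
        ((Ks:ℝ≥0∞) * eLpNorm (fderiv ℝ (⇑z)) 2 volume) := mul_le_mul_right (hKs z) _
    _ = (ENNReal.ofReal 144 * (Ks:ℝ≥0∞)) * eLpNorm (⇑z) 2 volume *
        eLpNorm (fderiv ℝ (⇑z)) 2 volume := by ring
    _ ≤ ENNReal.ofReal (144 * ((Ks:ℝ) + 1)) * eLpNorm (⇑z) 2 volume *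
        eLpNorm (fderiv ℝ (⇑z)) 2 volume := by
        exact mul_le_mul_left (mul_le_mul_left hc _) _
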